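/- If I is a stable monomial ideal generated in degree 2 in K[x_1,...,x_n], a-determined for a vector a, then the a-dual \hat{I}^{[a]} has linear quotients. -/

import Mathlib

open MvPolynomial Finsupp

/-- The monomial ideal generated by the monomials with exponent vectors in `S`. -/
noncomputable def monomialIdeal (K : Type*) [Field K] {n : ℕ} (S : Finset (Fin n →₀ ℕ)) :
    Ideal (MvPolynomial (Fin n) K) :=
  Ideal.span ((fun s => (monomial s (1 : K))) '' S)

/-- Exponent vectors of the generators `x^a / f` of the `a`-dual. -/
noncomputable def dualGens {n : ℕ} (a : Fin n →₀ ℕ) (S : Finset (Fin n →₀ ℕ)) :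
    Finset (Fin n →₀ ℕ) :=
  S.image (fun s => a - s)

/-- `I` is a stable monomial ideal: for every monomial `m ∈ I` and every `i < max(m)`
(where `j = max(m)` is the largest index with nonzero exponent), `m·x_i/x_j ∈ I`. -/
def IsStable {K : Type*} [Field K] {n : ℕ} (I : Ideal (MvPolynomial (Fin n) K)) : Prop :=
  ∀ (s : Fin n →₀ ℕ) (i j : Fin n), monomial s (1 : K) ∈ I →
    s j ≠ 0 → (∀ k, j < k → s k = 0) → i < j →
    monomial (s + single i 1 - single j 1) (1 : K) ∈ I

/-- Linear quotients: an ordering `g_1,…,g_v` of the generators such that each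
`(g_1,…,g_{k-1}) : g_k` is generated by variables. -/
def HasLinearQuotients (K : Type*) [Field K] {n : ℕ} (T : Finset (Fin n →₀ ℕ)) : Prop :=
  ∃ L : List (Fin n →₀ ℕ), L.Nodup ∧ L.toFinset = T ∧
    ∀ (k : ℕ) (hk : k < L.length), 1 ≤ k →
      ∃ V : Set (Fin n),
        Submodule.colon (monomialIdeal K (L.take k).toFinset)
            (Ideal.span {monomial (L.get ⟨k, hk⟩) (1 : K)}) =
          Ideal.span ((fun j => (X j : MvPolynomial (Fin n) K)) '' V)

namespace LQAux

variable {n : ℕ}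

/-- total degree of an exponent vector -/
def deg (s : Fin n →₀ ℕ) : ℕ := s.sum fun _ e => e

lemma deg_add (u v : Fin n →₀ ℕ) : deg (u + v) = deg u + deg v :=
  Finsupp.sum_add_index' (fun _ => rfl) (fun _ _ _ => rfl)

lemma eq_zero_of_deg_eq_zero {w : Fin n →₀ ℕ} (h : deg w = 0) : w = 0 := by
  have h' := Finset.sum_eq_zero_iff.mp h
  ext x
  by_cases hx : x ∈ w.support
  · exact h' x hx
  · simpa using (Finsupp.notMem_support_iff.mp hx)

lemma deg_mono {u v : Fin n →₀ ℕ} (h : u ≤ v) : deg u ≤ deg v := by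
  have hc := add_tsub_cancel_of_le h
  calc deg u ≤ deg u + deg (v - u) := Nat.le_add_right _ _
    _ = deg (u + (v - u)) := (deg_add _ _).symm
    _ = deg v := by rw [hc]

lemma eq_of_le_of_deg_le {u v : Fin n →₀ ℕ} (h : u ≤ v) (hd : deg v ≤ deg u) : u = v := by
  have h1 := add_tsub_cancel_of_le h
  have h2 : deg (v - u) = 0 := by
    have := deg_add u (v - u)
    rw [h1] at this
    omega
  rw [← h1, eq_zero_of_deg_eq_zero h2, add_zero]

lemma deg_single (i : Fin n) (c : ℕ) : deg (single i c) = c := by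
  simp [deg, Finsupp.sum_single_index]

lemma dec1 {w : Fin n →₀ ℕ} (h : deg w = 1) : ∃ i, w = single i 1 := by
  have hne : w.support.Nonempty := by
    rcases Finset.eq_empty_or_nonempty w.support with he | hne
    · exfalso; rw [deg, Finsupp.sum, he, Finset.sum_empty] at h; omega
    · exact hne
  obtain ⟨i, hi⟩ := hne
  have hsub : {i} ⊆ w.support := Finset.singleton_subset_iff.mpr hi
  have hsplit := Finset.sum_sdiff (f := fun x => w x) hsub
  rw [Finset.sum_singleton] at hsplit
  have hwi : w i ≠ 0 := Finsupp.mem_support_iff.mp hi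
  have hdeg : (∑ x ∈ w.support \ {i}, w x) + w i = 1 := by rw [hsplit]; exact h
  have hrest : ∀ x ∈ w.support \ {i}, w x = 0 :=
    Finset.sum_eq_zero_iff.mp (by omega)
  refine ⟨i, ?_⟩
  ext x
  rcases eq_or_ne x i with rfl | hxi
  · simp [Finsupp.single_apply]; omega
  · rw [Finsupp.single_apply, if_neg (fun hh => hxi hh.symm)]
    by_cases hx : x ∈ w.support
    · exact hrest x (Finset.mem_sdiff.mpr ⟨hx, by simp [hxi]⟩)
    · exact Finsupp.notMem_support_iff.mp hx

lemma dec2 {w : Fin n →₀ ℕ} (h : deg w = 2) :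
    ∃ m M : Fin n, m ≤ M ∧ w = single m 1 + single M 1 := by
  have hne : w.support.Nonempty := by
    rcases Finset.eq_empty_or_nonempty w.support with he | hne
    · exfalso; rw [deg, Finsupp.sum, he, Finset.sum_empty] at h; omega
    · exact hne
  set m := w.support.min' hne with hm
  set M := w.support.max' hne with hM
  have hmmem : m ∈ w.support := Finset.min'_mem _ _
  have hMmem : M ∈ w.support := Finset.max'_mem _ _
  have hmM : m ≤ M := Finset.min'_le _ _ hMmem
  have hwm : w m ≠ 0 := Finsupp.mem_support_iff.mp hmmem
  have hwM : w M ≠ 0 := Finsupp.mem_support_iff.mp hMmem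
  have hbd : ∀ x ∈ w.support, m ≤ x ∧ x ≤ M := fun x hx =>
    ⟨Finset.min'_le _ _ hx, Finset.le_max' _ _ hx⟩
  refine ⟨m, M, hmM, ?_⟩
  rcases eq_or_ne m M with heq | hne'
  · have hsupp : w.support ⊆ {M} := fun x hx => by
      have := hbd x hx; rw [heq] at this
      exact Finset.mem_singleton.mpr (le_antisymm this.2 this.1)
    have h2 : w M = 2 := by
      rw [deg, Finsupp.sum,
        Finset.sum_subset hsupp (fun x _ hx => Finsupp.notMem_support_iff.mp hx),
        Finset.sum_singleton] at h
      exact h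
    ext x
    simp only [Finsupp.add_apply, Finsupp.single_apply, heq]
    rcases eq_or_ne M x with hMx | hMx
    · rw [if_pos hMx, ← hMx, h2]
    · rw [if_neg hMx]
      have hxs : x ∉ w.support := fun hmem => hMx (Finset.mem_singleton.mp (hsupp hmem)).symm
      rw [Finsupp.notMem_support_iff.mp hxs]
      omega
  · have hsub : {m, M} ⊆ w.support := by
      intro x hx; rcases Finset.mem_insert.mp hx with rfl | hx
      · exact hmmem
      · rw [Finset.mem_singleton.mp hx]; exact hMmem
    have hsplit := Finset.sum_sdiff (f := fun x => w x) hsub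
    rw [Finset.sum_pair hne'] at hsplit
    have hdeg2 : (∑ x ∈ w.support \ {m, M}, w x) + (w m + w M) = 2 := by rw [hsplit]; exact h
    have hrest : ∀ x ∈ w.support \ {m, M}, w x = 0 := Finset.sum_eq_zero_iff.mp (by omega)
    have hwm1 : w m = 1 := by omega
    have hwM1 : w M = 1 := by omega
    ext x
    simp only [Finsupp.add_apply, Finsupp.single_apply]
    rcases eq_or_ne m x with hmx | hmx
    · rw [if_pos hmx, if_neg (fun hh : M = x => hne' (hmx.trans hh.symm)), ← hmx, hwm1]
      omega
    · rcases eq_or_ne M x with hMx | hMx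
      · rw [if_neg hmx, if_pos hMx, ← hMx, hwM1]
      · rw [if_neg hmx, if_neg hMx]
        by_cases hx : x ∈ w.support
        · exact hrest x (Finset.mem_sdiff.mpr ⟨hx, by
            simp only [Finset.mem_insert, Finset.mem_singleton]
            exact fun hh => hh.elim (fun h1 => hmx h1.symm) (fun h1 => hMx h1.symm)⟩)
        · exact Finsupp.notMem_support_iff.mp hx

/-- the ordering weight: `(n+1)·max + min`. -/
noncomputable def om (n : ℕ) (s : Fin n →₀ ℕ) : ℕ :=
  (n+1) * (s.support.sup fun i => (i : ℕ)) + (n - s.support.sup fun i => n - (i : ℕ))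

lemma support_pair {m M : Fin n} (hmM : m ≤ M) (x : Fin n) :
    x ∈ (single m 1 + single M 1 : Fin n →₀ ℕ).support ↔ x = m ∨ x = M := by
  rw [Finsupp.mem_support_iff, Finsupp.add_apply, Finsupp.single_apply, Finsupp.single_apply]
  constructor
  · intro h
    by_contra hc
    push_neg at hc
    rw [if_neg (fun hh : m = x => hc.1 hh.symm), if_neg (fun hh : M = x => hc.2 hh.symm)] at h
    omega
  · rintro (rfl | rfl) <;> simp

lemma om_pair {m M : Fin n} (hmM : m ≤ M) :
    om n (single m 1 + single M 1) = (n+1) * M + m := by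
  have h1 : ((single m 1 + single M 1 : Fin n →₀ ℕ).support.sup fun i => (i : ℕ)) = M := by
    apply le_antisymm
    · apply Finset.sup_le
      intro x hx
      rcases (support_pair hmM x).mp hx with rfl | rfl
      · exact_mod_cast hmM
      · exact le_refl _
    · exact Finset.le_sup (f := fun i : Fin n => (i : ℕ)) ((support_pair hmM M).mpr (Or.inr rfl))
  have h2 : ((single m 1 + single M 1 : Fin n →₀ ℕ).support.sup fun i => n - (i : ℕ)) = n - m := by
    apply le_antisymm
    · apply Finset.sup_le
      intro x hx
      rcases (support_pair hmM x).mp hx with rfl | rfl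
      · exact le_refl _
      · exact Nat.sub_le_sub_left (by exact_mod_cast hmM) n
    · exact Finset.le_sup (f := fun i : Fin n => n - (i : ℕ)) ((support_pair hmM m).mpr (Or.inl rfl))
  rw [om, h1, h2, Nat.sub_sub_self (le_of_lt m.isLt)]

lemma om_lt {A B C D : ℕ} (hB : B ≤ n) (h : A < C ∨ (A = C ∧ B < D)) :
    (n+1) * A + B < (n+1) * C + D := by
  rcases h with h | ⟨rfl, h⟩
  · calc (n+1) * A + B < (n+1) * A + (n+1) := by omega
      _ = (n+1) * (A+1) := by ring
      _ ≤ (n+1) * C := Nat.mul_le_mul_left _ h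
      _ ≤ (n+1) * C + D := Nat.le_add_right _ _
  · omega

lemma om_inj_aux {m M m' M' : Fin n} (hmM : m ≤ M) (hmM' : m' ≤ M')
    (h : om n (single m 1 + single M 1) = om n (single m' 1 + single M' 1)) :
    m = m' ∧ M = M' := by
  rw [om_pair hmM, om_pair hmM'] at h
  have hM : (M : ℕ) = M' := by
    have := congrArg (fun t => t / (n+1)) h
    simpa [Nat.mul_add_div, Nat.div_eq_of_lt (Nat.lt_succ_of_lt m.isLt),
      Nat.div_eq_of_lt (Nat.lt_succ_of_lt m'.isLt)] using this
  have hm : (m : ℕ) = m' := by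
    have := congrArg (fun t => t % (n+1)) h
    simpa [Nat.mul_add_mod, Nat.mod_eq_of_lt (Nat.lt_succ_of_lt m.isLt),
      Nat.mod_eq_of_lt (Nat.lt_succ_of_lt m'.isLt)] using this
  exact ⟨Fin.ext hm, Fin.ext hM⟩

variable {K : Type*} [Field K]

lemma mem_monomialIdeal_iff {S : Finset (Fin n →₀ ℕ)} {w : Fin n →₀ ℕ} :
    monomial w (1 : K) ∈ monomialIdeal K S ↔ ∃ s ∈ S, s ≤ w := by
  classical
  rw [monomialIdeal, MvPolynomial.mem_ideal_span_monomial_image]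
  constructor
  · intro h
    obtain ⟨s, hs, hle⟩ := h w (by simp [MvPolynomial.support_monomial])
    exact ⟨s, hs, hle⟩
  · rintro ⟨s, hs, hle⟩ xi hxi
    rw [MvPolynomial.support_monomial, if_neg (one_ne_zero)] at hxi
    rw [Finset.mem_singleton] at hxi
    exact ⟨s, hs, hxi ▸ hle⟩

lemma sub_inj {s s' a : Fin n →₀ ℕ} (h1 : s ≤ a) (h2 : s' ≤ a) (h : a - s = a - s') :
    s = s' := by
  ext x
  have hx := congrArg (fun f : Fin n →₀ ℕ => f x) h
  simp only [Finsupp.tsub_apply] at hx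
  have h1x := Finsupp.le_def.mp h1 x
  have h2x := Finsupp.le_def.mp h2 x
  omega

/-- The key combinatorial claim coming from stability. -/
lemma key_claim {S : Finset (Fin n →₀ ℕ)}
    (hstable : IsStable (monomialIdeal K S)) (hdeg : ∀ s ∈ S, deg s = 2)
    {s s' : Fin n →₀ ℕ} (hs : s ∈ S) (hs' : s' ∈ S) (hlt : om n s' < om n s) :
    ∃ s'' ∈ S, om n s'' < om n s ∧ ∃ i, s - s'' = single i 1 ∧ single i 1 ≤ s - s' := by
  have hne : s ≠ s' := fun h => by rw [h] at hlt; exact lt_irrefl _ hlt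
  obtain ⟨m, M, hmM, hrep⟩ := dec2 (hdeg s hs)
  obtain ⟨p, q, hpq, hrep'⟩ := dec2 (hdeg s' hs')
  have hd2 : deg (s - s') ≤ 2 := by rw [← hdeg s hs]; exact deg_mono tsub_le_self
  have hd0 : deg (s - s') ≠ 0 := by
    intro h0
    have hle : s ≤ s' := tsub_eq_zero_iff_le.mp (eq_zero_of_deg_eq_zero h0)
    exact hne (eq_of_le_of_deg_le hle (by rw [hdeg s hs, hdeg s' hs']))
  have hpairs : ∀ x : Fin n, s x = (if m = x then 1 else 0) + (if M = x then 1 else 0) := by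
    intro x; rw [hrep]; simp [Finsupp.single_apply]
  have hpairs' : ∀ x : Fin n, s' x = (if p = x then 1 else 0) + (if q = x then 1 else 0) := by
    intro x; rw [hrep']; simp [Finsupp.single_apply]
  have hsM : 1 ≤ s M := by rw [hpairs M, if_pos rfl]; omega
  have hsm : 1 ≤ s m := by rw [hpairs m, if_pos rfl]; omega
  rcases (by omega : deg (s - s') = 1 ∨ deg (s - s') = 2) with h1 | h2
  · obtain ⟨i, hi⟩ := dec1 h1
    exact ⟨s', hs', hlt, i, hi, hi ▸ le_refl _⟩
  · -- disjoint case
    have hss' : s - s' = s :=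
      eq_of_le_of_deg_le tsub_le_self (by rw [hdeg s hs, h2])
    have hdisj : ∀ x, s x ≠ 0 → s' x = 0 := by
      intro x hx
      have := congrArg (fun f : Fin n →₀ ℕ => f x) hss'
      simp only [Finsupp.tsub_apply] at this
      omega
    have hs'p : 1 ≤ s' p := by rw [hpairs' p, if_pos rfl]; omega
    have hs'q : 1 ≤ s' q := by rw [hpairs' q, if_pos rfl]; omega
    have hpm : p ≠ m := fun h => by
      have := hdisj m (by omega); rw [← h] at this; omega
    have hpM : p ≠ M := fun h => by
      have := hdisj M (by omega); rw [← h] at this; omega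
    have hqM : q ≠ M := fun h => by
      have := hdisj M (by omega); rw [← h] at this; omega
    have homs : om n s = (n+1) * M + m := by rw [hrep, om_pair hmM]
    have homs' : om n s' = (n+1) * q + p := by rw [hrep', om_pair hpq]
    have hqMlt : (q : ℕ) < M := by
      rcases lt_or_ge (q : ℕ) (M : ℕ) with h | h
      · exact h
      · exfalso
        rcases eq_or_lt_of_le h with heq | hlt'
        · exact hqM (Fin.ext heq.symm)
        · have : om n s < om n s' := by
            rw [homs, homs']
            exact om_lt (le_of_lt m.isLt) (Or.inl hlt')
          omega
    have hpMlt : p < M := lt_of_le_of_lt hpq (by exact hqMlt)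
    -- apply stability
    have hsmem : monomial s (1 : K) ∈ monomialIdeal K S :=
      mem_monomialIdeal_iff.mpr ⟨s, hs, le_refl _⟩
    have htop : ∀ k, M < k → s k = 0 := by
      intro k hk
      rw [hpairs k, if_neg (fun hh : m = k => by
        rw [hh] at hmM; exact absurd (lt_of_le_of_lt hmM hk) (lt_irrefl k)),
        if_neg (fun hh : M = k => by rw [hh] at hk; exact lt_irrefl k hk)]
    have hstep := hstable s p M hsmem (by omega) htop hpMlt
    have heq2 : s + single p 1 - single M 1 = single m 1 + single p 1 := by
      rw [hrep, add_right_comm, add_tsub_cancel_right]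
    rw [heq2] at hstep
    obtain ⟨u, hu, hule⟩ := mem_monomialIdeal_iff.mp hstep
    have hdu : deg (single m 1 + single p 1 : Fin n →₀ ℕ) = 2 := by
      rw [deg_add, deg_single, deg_single]
    have hueq : u = single m 1 + single p 1 :=
      eq_of_le_of_deg_le hule (by rw [hdeg u hu, hdu])
    have hkey : s - u = single M 1 := by
      rw [hueq, hrep]
      ext x
      simp only [Finsupp.tsub_apply, Finsupp.add_apply, Finsupp.single_apply]
      rcases eq_or_ne M x with hMx | hMx
      · rw [if_pos hMx, if_neg (fun hh : p = x => hpM (hh.trans hMx.symm))]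
        generalize (if m = x then 1 else 0) = A
        omega
      · rw [if_neg hMx]
        generalize (if m = x then 1 else 0) = A
        generalize (if p = x then 1 else 0) = B
        omega
    have homu : om n u < om n s := by
      rw [homs, hueq]
      rcases le_total m p with hmp | hmp
      · rw [om_pair hmp]
        exact om_lt (le_of_lt m.isLt) (Or.inl (by
          have : (p : ℕ) < (M : ℕ) := hpMlt
          exact this))
      · rw [add_comm (single m 1) (single p 1), om_pair hmp]
        rcases lt_or_eq_of_le hmM with hlt2 | heq2'
        · exact om_lt (le_of_lt p.isLt) (Or.inl (by exact_mod_cast hlt2))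
        · refine om_lt (le_of_lt p.isLt) (Or.inr ⟨by rw [heq2'], ?_⟩)
          have hpm' : p < m := lt_of_le_of_ne hmp (fun hh => hpm hh)
          exact_mod_cast hpm'
    refine ⟨u, hu, homu, M, hkey, ?_⟩
    rw [hss']
    rw [Finsupp.le_def]
    intro x
    rw [Finsupp.single_apply]
    rcases eq_or_ne M x with hMx | hMx
    · rw [if_pos hMx, ← hMx]; omega
    · rw [if_neg hMx]; omega

end LQAux

open LQAux

/-- If `I` is a stable monomial ideal generated in degree `2`, `a`-determined, then
its `a`-dual has linear quotients. -/
theorem dual_stable_degTwo_hasLinearQuotients (K : Type*) [Field K] {n : ℕ}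
    (a : Fin n →₀ ℕ) (S : Finset (Fin n →₀ ℕ))
    (hstable : IsStable (monomialIdeal K S))
    (hdeg : ∀ s ∈ S, (s.sum fun _ e => e) = 2)
    (hdet : ∀ s ∈ S, s ≤ a) :
    HasLinearQuotients K (dualGens a S) := by
  classical
  have hdeg' : ∀ s ∈ S, deg s = 2 := hdeg
  have hinj : ∀ s ∈ S, ∀ s' ∈ S, om n s = om n s' → s = s' := by
    intro s hs s' hs' h
    obtain ⟨m, M, hmM, hrep⟩ := dec2 (hdeg' s hs)
    obtain ⟨m', M', hmM', hrep'⟩ := dec2 (hdeg' s' hs')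
    rw [hrep, hrep'] at h ⊢
    obtain ⟨h1, h2⟩ := om_inj_aux hmM hmM' h
    rw [h1, h2]
  set vals := (S.image (om n)).sort (· ≤ ·) with hvals
  set pick : ℕ → (Fin n →₀ ℕ) := fun m => Function.invFunOn (om n) ↑S m with hpickdef
  have hpick : ∀ m ∈ S.image (om n), pick m ∈ S ∧ om n (pick m) = m := by
    intro m hm
    obtain ⟨s, hs, hsm⟩ := Finset.mem_image.mp hm
    have hex : ∃ s ∈ (↑S : Set (Fin n →₀ ℕ)), om n s = m := ⟨s, hs, hsm⟩
    exact ⟨Function.invFunOn_mem hex, Function.invFunOn_eq hex⟩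
  have hpickom : ∀ s ∈ S, pick (om n s) = s := by
    intro s hs
    have hm : om n s ∈ S.image (om n) := Finset.mem_image_of_mem _ hs
    exact hinj _ (hpick _ hm).1 s hs (hpick _ hm).2
  refine ⟨vals.map (fun m => a - pick m), ?_, ?_, ?_⟩
  · -- Nodup
    apply ((S.image (om n)).sort_nodup _).map_on
    intro x hx y hy hxy
    have hx' := (Finset.mem_sort _).mp hx
    have hy' := (Finset.mem_sort _).mp hy
    have hxs := hpick x hx'
    have hys := hpick y hy'
    have : pick x = pick y := sub_inj (hdet _ hxs.1) (hdet _ hys.1) hxy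
    rw [← hxs.2, ← hys.2, this]
  · -- toFinset
    ext u
    rw [List.mem_toFinset, List.mem_map, dualGens, Finset.mem_image]
    constructor
    · rintro ⟨m, hm, rfl⟩
      have hm' := (Finset.mem_sort _).mp hm
      exact ⟨pick m, (hpick m hm').1, rfl⟩
    · rintro ⟨s, hs, rfl⟩
      exact ⟨om n s, (Finset.mem_sort _).mpr (Finset.mem_image_of_mem _ hs),
        by rw [hpickom s hs]⟩
  · intro k hk _
    have hklen : k < vals.length := by simpa using hk
    set mk := vals.get ⟨k, hklen⟩ with hmk
    have hmkvals : mk ∈ vals := List.get_mem _ _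
    have hmkim : mk ∈ S.image (om n) := (Finset.mem_sort _).mp hmkvals
    set sk := pick mk with hskdef
    have hskS : sk ∈ S := (hpick _ hmkim).1
    have homsk : om n sk = mk := (hpick _ hmkim).2
    have hget : (vals.map (fun m => a - pick m)).get ⟨k, hk⟩ = a - sk := by
      simp [hskdef, hmk]
    have hsorted : vals.Pairwise (· < ·) := (Finset.sortedLT_sort _).pairwise
    -- characterization of the prefix
    have hpre : ∀ u, u ∈ ((vals.map (fun m => a - pick m)).take k).toFinset ↔
        ∃ s' ∈ S, om n s' < om n sk ∧ u = a - s' := by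
      intro u
      rw [List.mem_toFinset, ← List.map_take, List.mem_map]
      constructor
      · rintro ⟨m', hm', rfl⟩
        have hm'vals : m' ∈ vals := List.mem_of_mem_take hm'
        have hm'im : m' ∈ S.image (om n) := (Finset.mem_sort _).mp hm'vals
        refine ⟨pick m', (hpick _ hm'im).1, ?_, rfl⟩
        rw [homsk, (hpick _ hm'im).2]
        -- m' < mk since m' is in the strictly-sorted prefix
        obtain ⟨i, hi, rfl⟩ := List.mem_iff_get.mp hm'
        have hilen : (i : ℕ) < vals.length := by
          have := i.isLt
          simp only [List.length_take] at this
          omega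
        have hig : (vals.take k).get i = vals.get ⟨i, hilen⟩ := by
          simp [List.getElem_take]
        have hik : (i : ℕ) < k := by
          have := i.isLt
          simp only [List.length_take] at this
          omega
        rw [hig]
        exact hsorted.rel_get_of_lt (by exact hik)
      · rintro ⟨s', hs', hlt, rfl⟩
        refine ⟨om n s', ?_, by rw [hpickom s' hs']⟩
        have hmem : om n s' ∈ vals := (Finset.mem_sort _).mpr (Finset.mem_image_of_mem _ hs')
        have hltk : om n s' < vals.get ⟨k, hklen⟩ := by rw [← hmk, ← homsk]; exact hlt
        -- mem_take_of_lt_get inline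
        obtain ⟨i, hieq⟩ := List.mem_iff_get.mp hmem
        have hik : (i : ℕ) < k := by
          by_contra hc
          push_neg at hc
          rcases eq_or_lt_of_le hc with heq | hlt'
          · have : vals.get ⟨k, hklen⟩ = vals.get i := by congr 1; exact Fin.ext heq
            omega
          · have := hsorted.rel_get_of_lt (a := ⟨k, hklen⟩) (b := i) (by exact hlt')
            omega
        have hilen2 : (i : ℕ) < (vals.take k).length := by
          simp only [List.length_take]
          exact lt_min hik i.isLt
        have : (vals.take k).get ⟨i, hilen2⟩ = vals.get i := by
          simp [List.getElem_take]
        rw [← hieq, ← this]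
        exact List.get_mem _ _
    refine ⟨{i | ∃ s' ∈ S, om n s' < om n sk ∧ sk - s' = single i 1}, ?_⟩
    rw [hget]
    apply le_antisymm
    · -- colon ≤ span of variables
      intro f hf
      rw [Ideal.mem_colon_span_singleton] at hf
      suffices h : (∑ w ∈ f.support, monomial w (coeff w f)) ∈
          Ideal.span ((fun j => (X j : MvPolynomial (Fin n) K)) ''
            {i | ∃ s' ∈ S, om n s' < om n sk ∧ sk - s' = single i 1}) by
        rwa [f.support_sum_monomial_coeff] at h
      apply Ideal.sum_mem
      intro w hw
      have hw' : w + (a - sk) ∈ (f * monomial (a - sk) (1:K)).support := by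
        rw [MvPolynomial.mem_support_iff, MvPolynomial.coeff_mul_monomial, mul_one]
        exact MvPolynomial.mem_support_iff.mp hw
      rw [monomialIdeal, MvPolynomial.mem_ideal_span_monomial_image] at hf
      obtain ⟨u, hu, hule⟩ := hf _ hw'
      rw [Finset.mem_coe, hpre u] at hu
      obtain ⟨s', hs'S, hlt', rfl⟩ := hu
      -- sk - s'  ≤ w
      have hle2 : sk - s' ≤ w := by
        rw [Finsupp.le_def]
        intro x
        have h1 := Finsupp.le_def.mp hule x
        simp only [Finsupp.tsub_apply, Finsupp.add_apply] at h1 ⊢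
        have h2 := Finsupp.le_def.mp (hdet _ hs'S) x
        have h3 := Finsupp.le_def.mp (hdet _ hskS) x
        omega
      obtain ⟨s'', hs''S, hlt'', i, hdiff, hile⟩ :=
        key_claim hstable hdeg' hskS hs'S hlt'
      have hiV : i ∈ {i | ∃ s' ∈ S, om n s' < om n sk ∧ sk - s' = single i 1} :=
        ⟨s'', hs''S, hlt'', hdiff⟩
      have hwi : 1 ≤ w i := by
        have := Finsupp.le_def.mp (le_trans hile hle2) i
        simpa [Finsupp.single_apply] using this
      have hsw : single i 1 ≤ w := by
        rw [Finsupp.le_def]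
        intro x
        rw [Finsupp.single_apply]
        rcases eq_or_ne i x with rfl | hix
        · rw [if_pos rfl]; omega
        · rw [if_neg hix]; omega
      have hmono : monomial w (coeff w f) =
          X i * monomial (w - single i 1) (coeff w f) := by
        rw [show (X i : MvPolynomial (Fin n) K) = monomial (single i 1) 1 from rfl,
          MvPolynomial.monomial_mul, one_mul, add_tsub_cancel_of_le hsw]
      rw [hmono]
      exact Ideal.mul_mem_right _ _ (Ideal.subset_span ⟨i, hiV, rfl⟩)
    · -- span of variables ≤ colon
      rw [Ideal.span_le]
      rintro _ ⟨i, hiV, rfl⟩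
      obtain ⟨s', hs'S, hlt', hdiff⟩ := hiV
      rw [SetLike.mem_coe, Ideal.mem_colon_span_singleton]
      have hXmul : (X i : MvPolynomial (Fin n) K) * monomial (a - sk) 1 =
          monomial (single i 1 + (a - sk)) 1 := by
        rw [show (X i : MvPolynomial (Fin n) K) = monomial (single i 1) 1 from rfl,
          MvPolynomial.monomial_mul, one_mul]
      rw [hXmul, mem_monomialIdeal_iff]
      refine ⟨a - s', (hpre _).mpr ⟨s', hs'S, hlt', rfl⟩, ?_⟩
      rw [Finsupp.le_def]
      intro x
      have hx := congrArg (fun f : Fin n →₀ ℕ => f x) hdiff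
      simp only [Finsupp.tsub_apply] at hx
      simp only [Finsupp.tsub_apply, Finsupp.add_apply]
      rw [← hx]
      have h2 := Finsupp.le_def.mp (hdet _ hs'S) x
      have h3 := Finsupp.le_def.mp (hdet _ hskS) x
      omega
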